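/- For the quotient A_n/(A_{p-1} × A_{n-p}), the Bruhat order on minimal coset representatives is isomorphic as a poset to the containment order on partitions fitting inside a p × (n+1-p) rectangle. -/

import Mathlib

open Equiv Finset

/-- The number of inversions of a permutation of `Fin m`; this is its Coxeter length
in the symmetric group `A_(m-1)`. -/
def invNum {m : ℕ} (w : Equiv.Perm (Fin m)) : ℕ :=
  ((Finset.univ : Finset (Fin m × Fin m)).filter
    (fun p => p.1 < p.2 ∧ w p.2 < w p.1)).card

/-- The strong Bruhat order on the symmetric group: the reflexive-transitive closure
of the relation "multiply by a reflection (a transposition) and increase the length". -/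
def bruhatLE {m : ℕ} (u v : Equiv.Perm (Fin m)) : Prop :=
  Relation.ReflTransGen
    (fun x y => invNum x < invNum y ∧ ∃ a b : Fin m, a ≠ b ∧ y = x * Equiv.swap a b)
    u v

section Key
variable {m : ℕ}

def invSet (w : Perm (Fin m)) : Finset (Fin m × Fin m) :=
  ((Finset.univ : Finset (Fin m × Fin m)).filter
    (fun p => p.1 < p.2 ∧ w p.2 < w p.1))

lemma invNum_def (w : Perm (Fin m)) : invNum w = (invSet w).card := rfl

lemma mem_invSet {w : Perm (Fin m)} {pr : Fin m × Fin m} :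
    pr ∈ invSet w ↔ pr.1 < pr.2 ∧ w pr.2 < w pr.1 := by simp [invSet]

def hmap (z : Perm (Fin m)) (a b : Fin m) : Fin m × Fin m → Fin m × Fin m := fun pr =>
  if pr.1 = a ∧ pr.2 = b then (a, b)
  else if pr.2 = a then (if z b < z pr.1 then (pr.1, a) else (pr.1, b))
  else if pr.1 = a then (a, pr.2)
  else if pr.1 = b then (if z pr.2 < z a then (b, pr.2) else (a, pr.2))
  else pr

def gmap (z : Perm (Fin m)) (a b : Fin m) : Fin m × Fin m → Fin m × Fin m := fun pr =>
  if pr.1 = a ∧ pr.2 = b then (a, b)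
  else if pr.2 = a then pr
  else if pr.2 = b then (if z pr.1 < z b then (pr.1, a) else pr)
  else if pr.1 = a then (if z pr.2 < z a then pr else (b, pr.2))
  else pr

theorem invNum_lt_swap (z : Perm (Fin m)) {a b : Fin m} (hab : a < b) (hz : z a < z b) :
    invNum z < invNum (z * Equiv.swap a b) := by
  have hne : a ≠ b := ne_of_lt hab
  set y := z * Equiv.swap a b with hy
  have hya : y a = z b := by simp [hy, Equiv.Perm.mul_apply]
  have hyb : y b = z a := by simp [hy, Equiv.Perm.mul_apply]
  have hyo : ∀ c : Fin m, c ≠ a → c ≠ b → y c = z c := by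
    intro c h1 h2; simp [hy, Equiv.Perm.mul_apply, Equiv.swap_apply_of_ne_of_ne h1 h2]
  have habs : (a, b) ∉ invSet z := by
    simp [mem_invSet]; intro _; exact le_of_lt hz
  have hmaps : ∀ pr ∈ insert (a, b) (invSet z), hmap z a b pr ∈ invSet y := by
    rintro ⟨i, j⟩ hpr
    rcases Finset.mem_insert.1 hpr with h | h
    · rw [h]
      have hm : hmap z a b (a, b) = (a, b) := by simp [hmap]
      rw [hm, mem_invSet]
      exact ⟨hab, by simp only; rw [hya, hyb]; exact hz⟩
    · rw [mem_invSet] at h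
      obtain ⟨hij, hval⟩ := h
      simp only at hij hval
      simp only [hmap]
      by_cases h1 : i = a ∧ j = b
      · exact absurd (h1.1 ▸ h1.2 ▸ hval) (not_lt.2 (le_of_lt hz))
      rw [if_neg h1]
      by_cases h2 : j = a
      · have hia : i < a := h2 ▸ hij
        have hinb : i ≠ b := ne_of_lt (lt_trans hia hab)
        have hina : i ≠ a := ne_of_lt hia
        have hvia : z a < z i := h2 ▸ hval
        rw [if_pos h2]
        by_cases h3 : z b < z i
        · rw [if_pos h3, mem_invSet]
          exact ⟨hia, by simp only; rw [hya, hyo i hina hinb]; exact h3⟩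
        · rw [if_neg h3, mem_invSet]
          refine ⟨lt_trans hia hab, ?_⟩
          simp only; rw [hyb, hyo i hina hinb]; exact hvia
      rw [if_neg h2]
      by_cases h3 : i = a
      · have hjb : j ≠ b := fun hh => h1 ⟨h3, hh⟩
        have haj : a < j := h3 ▸ hij
        have hvja : z j < z a := h3 ▸ hval
        rw [if_pos h3, mem_invSet]
        refine ⟨haj, ?_⟩
        simp only; rw [hya, hyo j h2 hjb]
        exact lt_trans hvja hz
      rw [if_neg h3]
      by_cases h4 : i = b
      · have hbj : b < j := h4 ▸ hij
        have hvjb : z j < z b := h4 ▸ hval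
        have hjb : j ≠ b := ne_of_gt hbj
        by_cases h5 : z j < z a
        · rw [if_pos h4, if_pos h5, mem_invSet]
          exact ⟨hbj, by simp only; rw [hyb, hyo j h2 hjb]; exact h5⟩
        · rw [if_pos h4, if_neg h5, mem_invSet]
          refine ⟨lt_trans hab hbj, ?_⟩
          simp only; rw [hya, hyo j h2 hjb]; exact hvjb
      rw [if_neg h4, mem_invSet]
      refine ⟨hij, ?_⟩
      by_cases h5 : j = b
      · have hvb : z b < z i := by rw [← h5]; exact hval
        simp only; rw [h5, hyb, hyo i h3 h4]
        exact lt_trans hz hvb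
      · simp only; rw [hyo i h3 h4, hyo j h2 h5]; exact hval
  have hginv : ∀ pr ∈ insert (a, b) (invSet z), gmap z a b (hmap z a b pr) = pr := by
    rintro ⟨i, j⟩ hpr
    rcases Finset.mem_insert.1 hpr with h | h
    · rw [h]
      simp [hmap, gmap]
    · rw [mem_invSet] at h
      obtain ⟨hij, hval⟩ := h
      simp only at hij hval
      simp only [hmap]
      by_cases h1 : i = a ∧ j = b
      · exact absurd (h1.1 ▸ h1.2 ▸ hval) (not_lt.2 (le_of_lt hz))
      rw [if_neg h1]
      by_cases h2 : j = a
      · have hia : i < a := h2 ▸ hij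
        have hinb : i ≠ b := ne_of_lt (lt_trans hia hab)
        have hina : i ≠ a := ne_of_lt hia
        rw [if_pos h2]
        by_cases h3 : z b < z i
        · rw [if_pos h3]
          simp [gmap, hina, hne.symm, h2]
        · rw [if_neg h3]
          have hzi : z i < z b := lt_of_le_of_ne (not_lt.1 h3) (fun hh => hinb (z.injective hh))
          simp [gmap, hina, hne, hzi, h2]
      rw [if_neg h2]
      by_cases h3 : i = a
      · have hjb : j ≠ b := fun hh => h1 ⟨h3, hh⟩
        have hvja : z j < z a := h3 ▸ hval
        rw [if_pos h3]
        simp [gmap, h2, hjb, hvja, h3]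
      rw [if_neg h3]
      by_cases h4 : i = b
      · have hbj : b < j := h4 ▸ hij
        have hja : j ≠ a := h2
        have hjb : j ≠ b := ne_of_gt hbj
        by_cases h5 : z j < z a
        · rw [if_pos h4, if_pos h5]
          simp [gmap, hja, hjb, hne, h4]
        · rw [if_pos h4, if_neg h5]
          have hza : z a < z j := lt_of_le_of_ne (not_lt.1 h5) (fun hh => hja (z.injective hh.symm))
          simp [gmap, hja, hjb, not_lt.2 (le_of_lt hza), h4]
      rw [if_neg h4]
      by_cases h5 : j = b
      · have hzb : z b < z i := h5 ▸ hval
        simp [gmap, h3, h2, h5, not_lt.2 (le_of_lt hzb), fun hh => h1 ⟨hh, h5⟩]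
      · simp [gmap, fun hh : i = a ∧ j = b => h1 hh, h2, h5, h3]
  have hinj : Set.InjOn (hmap z a b) (insert (a, b) (invSet z) : Finset _) := by
    intro p1 hp1 p2 hp2 hee
    have e1 := hginv p1 hp1
    rw [hee, hginv p2 hp2] at e1
    exact e1.symm
  calc invNum z < (insert (a, b) (invSet z)).card := by
        rw [invNum_def, Finset.card_insert_of_notMem habs]; omega
    _ ≤ (invSet y).card := Finset.card_le_card_of_injOn _ hmaps hinj
    _ = invNum y := (invNum_def y).symm

end Key

section Cnt
variable {m : ℕ}

/-- Number of positions in the first block (`i < p`) whose value is at least `j`. -/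
def cnt (p : ℕ) (w : Perm (Fin m)) (j : ℕ) : ℕ :=
  (Finset.univ.filter (fun i : Fin m => (i : ℕ) < p ∧ j ≤ (w i : ℕ))).card

lemma step_values {x : Perm (Fin m)} {a b : Fin m} (hab : a < b)
    (h : invNum x < invNum (x * Equiv.swap a b)) : x a < x b := by
  by_contra hc
  have hne : a ≠ b := ne_of_lt hab
  have hba : x b < x a :=
    lt_of_le_of_ne (not_lt.1 hc) (fun hh => hne (x.injective hh).symm)
  set y := x * Equiv.swap a b with hy
  have hya : y a = x b := by simp [hy, Equiv.Perm.mul_apply]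
  have hyb : y b = x a := by simp [hy, Equiv.Perm.mul_apply]
  have h2 : invNum y < invNum (y * Equiv.swap a b) :=
    invNum_lt_swap y hab (by rw [hya, hyb]; exact hba)
  have h3 : y * Equiv.swap a b = x := by
    rw [hy, mul_assoc, Equiv.swap_mul_self, mul_one]
  rw [h3] at h2
  omega

lemma cnt_step_aux (p : ℕ) (x : Perm (Fin m)) {a b : Fin m} (hab : a < b)
    (hlen : invNum x < invNum (x * Equiv.swap a b)) (j : ℕ) :
    cnt p x j ≤ cnt p (x * Equiv.swap a b) j := by
  have hval : x a < x b := step_values hab hlen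
  have hne : a ≠ b := ne_of_lt hab
  set y := x * Equiv.swap a b with hy
  have hkey : ∀ i : Fin m, y (Equiv.swap a b i) = x i := by
    intro i; simp [hy, Equiv.Perm.mul_apply]
  by_cases hbp : (b : ℕ) < p
  · -- both blocks inside first block: bijection by swap
    apply Finset.card_le_card_of_injOn (fun i => Equiv.swap a b i)
    · intro i hi
      simp only [Finset.mem_coe, Finset.mem_filter, Finset.mem_univ, true_and] at hi ⊢
      refine ⟨?_, by rw [hkey]; exact hi.2⟩
      rcases eq_or_ne i a with rfl | hia
      · rw [Equiv.swap_apply_left]; exact hbp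
      rcases eq_or_ne i b with rfl | hib
      · rw [Equiv.swap_apply_right]; exact lt_trans (Fin.lt_def.mp hab) hbp
      · rw [Equiv.swap_apply_of_ne_of_ne hia hib]; exact hi.1
    · exact fun i _ i' _ hh => (Equiv.swap a b).injective hh
  · -- b is outside the first block: the first filter is a subset of the second
    apply Finset.card_le_card
    intro i hi
    simp only [Finset.mem_filter, Finset.mem_univ, true_and] at hi ⊢
    obtain ⟨hip, hiv⟩ := hi
    refine ⟨hip, ?_⟩
    have hib : i ≠ b := fun hh => hbp (hh ▸ hip)
    rcases eq_or_ne i a with rfl | hia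
    · have : y i = x b := by
        rw [hy]; simp [Equiv.Perm.mul_apply]
      rw [this]
      exact le_trans hiv (le_of_lt hval)
    · rw [show y i = x i by rw [hy]; simp [Equiv.Perm.mul_apply,
        Equiv.swap_apply_of_ne_of_ne hia hib]]
      exact hiv

lemma cnt_bruhat {u v : Perm (Fin m)} (p : ℕ) (h : bruhatLE u v) (j : ℕ) :
    cnt p u j ≤ cnt p v j := by
  induction h with
  | refl => exact le_refl _
  | tail hxy hstep ih =>
      rename_i x y
      obtain ⟨hlen, a, b, hne, rfl⟩ := hstep
      rcases lt_or_gt_of_ne hne with hab | hab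
      · exact le_trans ih (cnt_step_aux p x hab hlen j)
      · rw [Equiv.swap_comm] at hlen ⊢
        exact le_trans ih (cnt_step_aux p x hab hlen j)

/-- count of positions `p ≤ i` with value at least `j`. -/
def dnt (p : ℕ) (w : Perm (Fin m)) (j : ℕ) : ℕ :=
  (Finset.univ.filter (fun i : Fin m => p ≤ (i : ℕ) ∧ j ≤ (w i : ℕ))).card

lemma cnt_add_dnt (p : ℕ) (w : Perm (Fin m)) (j : ℕ) :
    cnt p w j + dnt p w j = m - j := by
  classical
  have h1 : cnt p w j + dnt p w j
      = (Finset.univ.filter (fun i : Fin m => j ≤ (w i : ℕ))).card := by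
    rw [cnt, dnt]
    rw [show (Finset.univ.filter (fun i : Fin m => (i : ℕ) < p ∧ j ≤ (w i : ℕ)))
        = ((Finset.univ.filter (fun i : Fin m => j ≤ (w i : ℕ))).filter
            (fun i : Fin m => (i : ℕ) < p)) by
      rw [Finset.filter_filter]; apply Finset.filter_congr; intro i _; tauto]
    rw [show (Finset.univ.filter (fun i : Fin m => p ≤ (i : ℕ) ∧ j ≤ (w i : ℕ)))
        = ((Finset.univ.filter (fun i : Fin m => j ≤ (w i : ℕ))).filter
            (fun i : Fin m => ¬ (i : ℕ) < p)) by
      rw [Finset.filter_filter]; apply Finset.filter_congr; intro i _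
      simp [not_lt, and_comm]]
    exact Finset.card_filter_add_card_filter_not _
  rw [h1]
  have h2 : (Finset.univ.filter (fun i : Fin m => j ≤ (w i : ℕ))).card
      = (Finset.univ.filter (fun v : Fin m => j ≤ (v : ℕ))).card := by
    apply Finset.card_bij' (fun i _ => w i) (fun v _ => w⁻¹ v)
    · intro i hi; simp only [Finset.mem_filter, Finset.mem_univ, true_and] at hi ⊢; exact hi
    · intro v hv; simp only [Finset.mem_filter, Finset.mem_univ, true_and] at hv ⊢
      rw [Equiv.Perm.inv_def, Equiv.apply_symm_apply]; exact hv
    · intro i _; simp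
    · intro v _; simp
  rw [h2]
  by_cases hj : j < m
  · have : (Finset.univ.filter (fun v : Fin m => j ≤ (v : ℕ)))
        = Finset.Ici (⟨j, hj⟩ : Fin m) := by
      ext v; simp [Fin.le_def]
    rw [this, Fin.card_Ici]
  · rw [show (Finset.univ.filter (fun v : Fin m => j ≤ (v : ℕ))) = ∅ by
      apply Finset.filter_false_of_mem; intro v _; omega]
    simp; omega

end Cnt

section Grass

abbrev GrassType (n p : ℕ) := {w : Equiv.Perm (Fin (n + 1)) //
    (∀ i j : Fin (n + 1), i < j → (j : ℕ) < p → w i < w j) ∧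
    (∀ i j : Fin (n + 1), p ≤ (i : ℕ) → i < j → w i < w j)}

abbrev PartType (n p : ℕ) := {f : Fin (n + 1 - p) → Fin (p + 1) // Antitone f}

variable {n p : ℕ}

/-- gap estimate on the second block -/
lemma sb_gap (w : GrassType n p) {k l : ℕ} (hkl : k ≤ l) (hl : l < n + 1 - p)
    (hk' : p + k < n + 1) (hl' : p + l < n + 1) :
    (w.1 ⟨p + k, hk'⟩ : ℕ) + (l - k) ≤ (w.1 ⟨p + l, hl'⟩ : ℕ) := by
  induction l, hkl using Nat.le_induction with
  | base => simp
  | succ l hkl ih =>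
      have hl2 : l < n + 1 - p := by omega
      have hl2' : p + l < n + 1 := by omega
      have hstep : w.1 ⟨p + l, hl2'⟩ < w.1 ⟨p + l + 1, hl'⟩ := by
        apply w.2.2 ⟨p + l, hl2'⟩ ⟨p + l + 1, hl'⟩
        · simp
        · rw [Fin.lt_def]; simp
      rw [Fin.lt_def] at hstep
      have hcast : (⟨p + l + 1, hl'⟩ : Fin (n + 1)) = ⟨p + (l + 1), hl'⟩ := rfl
      rw [hcast] at hstep
      have := ih hl2 hl2'
      omega

lemma sb_lb (w : GrassType n p) {k : ℕ} (hk : k < n + 1 - p) (hk' : p + k < n + 1) :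
    k ≤ (w.1 ⟨p + k, hk'⟩ : ℕ) := by
  have h0 : p + 0 < n + 1 := by omega
  have := sb_gap w (Nat.zero_le k) hk h0 hk'
  omega

lemma sb_ub (w : GrassType n p) (hpn : p ≤ n) {k : ℕ} (hk : k < n + 1 - p)
    (hk' : p + k < n + 1) : (w.1 ⟨p + k, hk'⟩ : ℕ) ≤ p + k := by
  have hq : n - p < n + 1 - p := by omega
  have hq' : p + (n - p) < n + 1 := by omega
  have := sb_gap w (show k ≤ n - p by omega) hq hk' hq'
  have hle : (w.1 ⟨p + (n - p), hq'⟩ : ℕ) ≤ n := by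
    have := (w.1 ⟨p + (n - p), hq'⟩).isLt; omega
  omega

/-- the partition associated to a Grassmannian permutation -/
def toPart (w : GrassType n p) : PartType n p :=
  ⟨fun k => ⟨p + (k : ℕ) - (w.1 ⟨p + (k : ℕ), by have := k.isLt; omega⟩ : ℕ), by
      have hk := k.isLt
      have := sb_lb w hk (by omega)
      omega⟩, by
    intro k l hkl
    rw [Fin.le_def]
    simp only
    have hk := k.isLt
    have hl := l.isLt
    have hg := sb_gap w (show (k : ℕ) ≤ l from hkl) hl
      (by omega : p + (k:ℕ) < n + 1) (by omega : p + (l:ℕ) < n + 1)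
    omega⟩

lemma toPart_apply (w : GrassType n p) (k : Fin (n + 1 - p)) :
    ((toPart w).1 k : ℕ)
      = p + (k : ℕ) - (w.1 ⟨p + (k : ℕ), by have := k.isLt; omega⟩ : ℕ) := rfl

/-- second-block values determined by a partition -/
def valsF (f : Fin (n + 1 - p) → Fin (p + 1)) : Fin (n + 1 - p) → Fin (n + 1) :=
  fun k => ⟨p + (k : ℕ) - (f k : ℕ), by have := k.isLt; omega⟩

lemma valsF_strictMono {f : Fin (n + 1 - p) → Fin (p + 1)} (hf : Antitone f) :
    StrictMono (valsF f) := by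
  intro k l h
  rw [Fin.lt_def]
  have h1 : (f l : ℕ) ≤ (f k : ℕ) := hf (le_of_lt h)
  have h2 := (f k).isLt
  have h3 : (k : ℕ) < (l : ℕ) := h
  simp only [valsF]
  omega

def compS (f : Fin (n + 1 - p) → Fin (p + 1)) : Finset (Fin (n + 1)) :=
  Finset.univ \ (Finset.univ.image (valsF f))

lemma compS_card (hpn : p ≤ n) {f : Fin (n + 1 - p) → Fin (p + 1)} (hf : Antitone f) :
    (compS f).card = p := by
  rw [compS, Finset.card_sdiff_of_subset (Finset.subset_univ _),
    Finset.card_image_of_injective _ (valsF_strictMono hf).injective]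
  simp [Fintype.card_fin]
  omega

noncomputable def wFun (hpn : p ≤ n) (f : Fin (n + 1 - p) → Fin (p + 1)) (hf : Antitone f) :
    Fin (n + 1) → Fin (n + 1) := fun i =>
  if h : (i : ℕ) < p then (compS f).orderEmbOfFin (compS_card hpn hf) ⟨i, h⟩
  else valsF f ⟨(i : ℕ) - p, by have := i.isLt; omega⟩

lemma wFun_bij (hpn : p ≤ n) (f : Fin (n + 1 - p) → Fin (p + 1)) (hf : Antitone f) :
    Function.Bijective (wFun hpn f hf) := by
  constructor
  · intro i i' hh
    unfold wFun at hh
    by_cases h1 : (i : ℕ) < p <;> by_cases h2 : (i' : ℕ) < p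
    · rw [dif_pos h1, dif_pos h2] at hh
      have := ((compS f).orderEmbOfFin (compS_card hpn hf)).injective hh
      rw [Fin.mk.injEq] at this
      exact Fin.ext this
    · rw [dif_pos h1, dif_neg h2] at hh
      exfalso
      have hmem := Finset.orderEmbOfFin_mem (compS f) (compS_card hpn hf) ⟨i, h1⟩
      rw [hh] at hmem
      rw [compS, Finset.mem_sdiff] at hmem
      exact hmem.2 (Finset.mem_image_of_mem _ (Finset.mem_univ _))
    · rw [dif_neg h1, dif_pos h2] at hh
      exfalso
      have hmem := Finset.orderEmbOfFin_mem (compS f) (compS_card hpn hf) ⟨i', h2⟩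
      rw [← hh] at hmem
      rw [compS, Finset.mem_sdiff] at hmem
      exact hmem.2 (Finset.mem_image_of_mem _ (Finset.mem_univ _))
    · rw [dif_neg h1, dif_neg h2] at hh
      have := (valsF_strictMono hf).injective hh
      rw [Fin.mk.injEq] at this
      have hi := i.isLt; have hi' := i'.isLt
      apply Fin.ext; omega
  · intro t
    by_cases ht : t ∈ Finset.univ.image (valsF f)
    · obtain ⟨k, _, hk⟩ := Finset.mem_image.1 ht
      have hk2 := k.isLt
      refine ⟨⟨p + (k : ℕ), by omega⟩, ?_⟩
      unfold wFun
      rw [dif_neg (by simp)]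
      rw [← hk]
      congr 1
      apply Fin.ext
      simp
    · have htS : t ∈ compS f := by rw [compS, Finset.mem_sdiff]; exact ⟨Finset.mem_univ _, ht⟩
      have := Finset.range_orderEmbOfFin (compS f) (compS_card hpn hf)
      have ht2 : t ∈ Set.range ((compS f).orderEmbOfFin (compS_card hpn hf)) := by
        rw [this]; exact htS
      obtain ⟨i0, hi0⟩ := ht2
      refine ⟨⟨(i0 : ℕ), by have := i0.isLt; omega⟩, ?_⟩
      unfold wFun
      rw [dif_pos (by simpa using i0.isLt)]
      rw [← hi0]

noncomputable def toPerm (hpn : p ≤ n) (F : PartType n p) : GrassType n p := by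
  refine ⟨Equiv.ofBijective (wFun hpn F.1 F.2) (wFun_bij hpn F.1 F.2), ?_, ?_⟩
  · intro i j hij hjp
    have hip : (i : ℕ) < p := lt_trans (Fin.lt_def.mp hij) hjp
    show wFun hpn F.1 F.2 i < wFun hpn F.1 F.2 j
    unfold wFun
    rw [dif_pos hip, dif_pos hjp]
    exact ((compS F.1).orderEmbOfFin (compS_card hpn F.2)).strictMono hij
  · intro i j hpi hij
    have hj : ¬ (j : ℕ) < p := by
      have := Fin.lt_def.mp hij; omega
    show wFun hpn F.1 F.2 i < wFun hpn F.1 F.2 j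
    unfold wFun
    rw [dif_neg (by omega), dif_neg hj]
    apply valsF_strictMono F.2
    rw [Fin.lt_def]
    have := Fin.lt_def.mp hij
    simp only
    omega

lemma toPerm_sb (hpn : p ≤ n) (F : PartType n p) {k : ℕ} (hk : k < n + 1 - p)
    (hk' : p + k < n + 1) :
    (toPerm hpn F).1 ⟨p + k, hk'⟩ = valsF F.1 ⟨k, hk⟩ := by
  show wFun hpn F.1 F.2 _ = _
  unfold wFun
  rw [dif_neg (by simp)]
  congr 1
  apply Fin.ext
  simp

lemma toPart_toPerm (hpn : p ≤ n) (F : PartType n p) : toPart (toPerm hpn F) = F := by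
  apply Subtype.ext
  funext k
  apply Fin.ext
  rw [toPart_apply]
  have hk := k.isLt
  rw [show (⟨p + (k : ℕ), by omega⟩ : Fin (n + 1))
      = (⟨p + (k : ℕ), by omega⟩ : Fin (n + 1)) from rfl]
  rw [toPerm_sb hpn F hk]
  have hfk := (F.1 k).isLt
  simp only [valsF]
  have : (⟨(k : ℕ), hk⟩ : Fin (n + 1 - p)) = k := Fin.ext rfl
  rw [this]
  omega

lemma toPerm_toPart (hpn : p ≤ n) (w : GrassType n p) : toPerm hpn (toPart w) = w := by
  apply Subtype.ext
  apply Equiv.ext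
  intro i
  have hiN := i.isLt
  by_cases hip : (i : ℕ) < p
  · -- first block : use uniqueness of monotone enumeration
    have key : (fun i0 : Fin p => w.1 ⟨(i0 : ℕ), by have := i0.isLt; omega⟩)
        = (compS (toPart w).1).orderEmbOfFin (compS_card hpn (toPart w).2) := by
      apply Finset.orderEmbOfFin_unique
      · intro x
        rw [compS, Finset.mem_sdiff]
        refine ⟨Finset.mem_univ _, ?_⟩
        rw [Finset.mem_image]
        rintro ⟨k, _, hk⟩
        -- valsF (toPart w) k = w ⟨p+k⟩
        have hk2 := k.isLt
        have hval : valsF (toPart w).1 k = w.1 ⟨p + (k : ℕ), by omega⟩ := by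
          apply Fin.ext
          simp only [valsF]
          rw [toPart_apply]
          have := sb_lb w hk2 (show p + (k:ℕ) < n+1 by omega)
          have := sb_ub w hpn hk2 (show p + (k:ℕ) < n+1 by omega)
          omega
        rw [hval] at hk
        have := w.1.injective hk
        rw [Fin.mk.injEq] at this
        have := x.isLt
        omega
      · intro x y hxy
        apply w.2.1
        · exact hxy
        · exact y.isLt
    show wFun hpn (toPart w).1 (toPart w).2 i = w.1 i
    unfold wFun
    rw [dif_pos hip]
    have := congrFun key ⟨(i : ℕ), hip⟩
    rw [← this]
  · -- second block
    show wFun hpn (toPart w).1 (toPart w).2 i = w.1 i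
    unfold wFun
    rw [dif_neg hip]
    apply Fin.ext
    simp only [valsF]
    rw [toPart_apply]
    simp only [Fin.val_mk]
    have hk : (i : ℕ) - p < n + 1 - p := by omega
    have h1 := sb_lb w hk (show p + ((i:ℕ) - p) < n + 1 by omega)
    have h2 := sb_ub w hpn hk (show p + ((i:ℕ) - p) < n + 1 by omega)
    have hcast : (⟨p + ((i : ℕ) - p), by omega⟩ : Fin (n + 1)) = i := by
      apply Fin.ext; simp only [Fin.val_mk]; omega
    rw [hcast] at h1 h2 ⊢
    omega

end Grass

section Back
variable {n p : ℕ}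

lemma back_aux (hpn : p ≤ n) : ∀ d : ℕ, ∀ F G : PartType n p,
    (∀ k, (F.1 k : ℕ) ≤ (G.1 k : ℕ)) →
    (∑ k, ((G.1 k : ℕ) - (F.1 k : ℕ))) = d →
    bruhatLE (toPerm hpn F).1 (toPerm hpn G).1 := by
  intro d
  induction d using Nat.strong_induction_on with
  | _ d IH =>
    intro F G hle hsum
    by_cases hFG : ∀ k, F.1 k = G.1 k
    · have : F = G := Subtype.ext (funext hFG)
      rw [this]
      exact Relation.ReflTransGen.refl
    · push_neg at hFG
      obtain ⟨kw, hkw⟩ := hFG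
      have hne : (Finset.univ.filter (fun k : Fin (n + 1 - p) => F.1 k < G.1 k)).Nonempty := by
        refine ⟨kw, ?_⟩
        simp only [Finset.mem_filter, Finset.mem_univ, true_and]
        exact lt_of_le_of_ne (by rw [Fin.le_def]; exact hle kw) hkw
      set k0 := (Finset.univ.filter (fun k : Fin (n + 1 - p) => F.1 k < G.1 k)).min' hne with hk0def
      have hk0mem := (Finset.univ.filter (fun k : Fin (n + 1 - p) => F.1 k < G.1 k)).min'_mem hne
      rw [Finset.mem_filter] at hk0mem
      have hk0 : (F.1 k0 : ℕ) < (G.1 k0 : ℕ) := hk0mem.2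
      have hmin : ∀ l : Fin (n + 1 - p), l < k0 → (F.1 l : ℕ) = (G.1 l : ℕ) := by
        intro l hl
        by_contra hcon
        have hmem : l ∈ Finset.univ.filter (fun k : Fin (n + 1 - p) => F.1 k < G.1 k) := by
          simp only [Finset.mem_filter, Finset.mem_univ, true_and]
          exact lt_of_le_of_ne (by rw [Fin.le_def]; exact hle l) (fun hh => hcon (by rw [hh]))
        have := Finset.min'_le _ _ hmem
        rw [← hk0def] at this
        exact absurd (lt_of_lt_of_le hl this) (lt_irrefl l)
      have hGp : (G.1 k0 : ℕ) ≤ p := by have := (G.1 k0).isLt; omega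
      -- the partition with one box added at k0
      set f' : Fin (n + 1 - p) → Fin (p + 1) :=
        fun l => if l = k0 then ⟨(F.1 k0 : ℕ) + 1, by omega⟩ else F.1 l with hf'def
      have hf'val : ∀ l, (f' l : ℕ) = if l = k0 then (F.1 k0 : ℕ) + 1 else (F.1 l : ℕ) := by
        intro l; rcases eq_or_ne l k0 with h | h <;> simp [hf'def, h]
      have hf' : Antitone f' := by
        intro l1 l2 h12
        rw [Fin.le_def, hf'val, hf'val]
        have hF12 : (F.1 l2 : ℕ) ≤ (F.1 l1 : ℕ) := F.2 h12
        split_ifs with h1 h2 h3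
        · omega
        · -- l2 = k0, l1 ≠ k0 : l1 < k0
          have hl1 : l1 < k0 := lt_of_le_of_ne (h1 ▸ h12) h2
          have heq := hmin l1 hl1
          have hGmono : (G.1 k0 : ℕ) ≤ (G.1 l1 : ℕ) := G.2 (le_of_lt hl1)
          omega
        · -- l1 = k0, l2 ≠ k0
          have h4 : (F.1 l2 : ℕ) ≤ (F.1 k0 : ℕ) := by rw [← h3]; exact hF12
          omega
        · omega
      set F' : PartType n p := ⟨f', hf'⟩ with hF'def
      have hle' : ∀ k, (F'.1 k : ℕ) ≤ (G.1 k : ℕ) := by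
        intro k
        show (f' k : ℕ) ≤ _
        rw [hf'val]
        split_ifs with h1
        · rw [h1]; omega
        · exact hle k
      have hd1 : 1 ≤ d := by
        rw [← hsum]
        calc (1 : ℕ) ≤ (G.1 k0 : ℕ) - (F.1 k0 : ℕ) := by omega
        _ ≤ _ := Finset.single_le_sum (f := fun k => ((G.1 k : ℕ) - (F.1 k : ℕ)))
            (fun k _ => Nat.zero_le _) (Finset.mem_univ k0)
      have hsum' : (∑ k, ((G.1 k : ℕ) - (F'.1 k : ℕ))) = d - 1 := by
        show (∑ k, ((G.1 k : ℕ) - (f' k : ℕ))) = d - 1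
        have hptw : ∀ k : Fin (n + 1 - p),
            ((G.1 k : ℕ) - (F.1 k : ℕ))
              = ((G.1 k : ℕ) - (f' k : ℕ)) + (if k = k0 then 1 else 0) := by
          intro k
          rw [hf'val]
          split_ifs with h1
          · rw [h1]; omega
          · omega
        rw [Finset.sum_congr rfl (fun k _ => hptw k), Finset.sum_add_distrib,
          Finset.sum_ite_eq' Finset.univ k0 (fun _ => 1)] at hsum
        simp only [Finset.mem_univ, if_true] at hsum
        omega
      -- the transposition step
      have hk0lt : (k0 : ℕ) < n + 1 - p := k0.isLt
      have ht' : p + (k0 : ℕ) < n + 1 := by omega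
      set t : Fin (n + 1) := ⟨p + (k0 : ℕ), ht'⟩ with htdef
      set w := (toPerm hpn F).1 with hwdef
      have hwt : w t = valsF F.1 k0 := by
        rw [hwdef, htdef]
        rw [toPerm_sb hpn F hk0lt ht']
      set c : ℕ := p + (k0 : ℕ) - (F.1 k0 : ℕ) with hcdef
      have hwtval : (w t : ℕ) = c := by rw [hwt]; rfl
      have hc1 : 1 ≤ c := by omega
      have hcn : c - 1 < n + 1 := by omega
      set cm : Fin (n + 1) := ⟨c - 1, hcn⟩ with hcmdef
      set pos1 := w.symm cm with hpos1def
      have hpos : w pos1 = cm := Equiv.apply_symm_apply w cm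
      have hpos_lt : (pos1 : ℕ) < p := by
        by_contra hnp
        push_neg at hnp
        have hl : (pos1 : ℕ) - p < n + 1 - p := by have := pos1.isLt; omega
        have hl' : p + ((pos1 : ℕ) - p) < n + 1 := by have := pos1.isLt; omega
        have hcast : pos1 = ⟨p + ((pos1 : ℕ) - p), hl'⟩ := Fin.ext (by simp only [Fin.val_mk]; omega)
        have hvv : w ⟨p + ((pos1 : ℕ) - p), hl'⟩ = valsF F.1 ⟨(pos1 : ℕ) - p, hl⟩ :=
          toPerm_sb hpn F hl hl'
        rw [← hcast, hpos] at hvv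
        have hvval : c - 1 = p + ((pos1 : ℕ) - p) - (F.1 ⟨(pos1 : ℕ) - p, hl⟩ : ℕ) := by
          have := congrArg Fin.val hvv
          simpa [valsF] using this
        set l : Fin (n + 1 - p) := ⟨(pos1 : ℕ) - p, hl⟩ with hldef
        rcases lt_trichotomy l k0 with hlt | heq | hgt
        · have h1 := hmin l hlt
          have h2 : (G.1 k0 : ℕ) ≤ (G.1 l : ℕ) := G.2 (le_of_lt hlt)
          have h3 : (l : ℕ) < (k0 : ℕ) := hlt
          simp only [hldef, Fin.val_mk] at h1 h2 h3 hvval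
          omega
        · rw [heq] at hvval
          have : (l : ℕ) = (k0 : ℕ) := congrArg Fin.val heq
          simp only [hldef, Fin.val_mk] at this
          omega
        · have h1 : (F.1 l : ℕ) ≤ (F.1 k0 : ℕ) := F.2 (le_of_lt hgt)
          have h3 : (k0 : ℕ) < (l : ℕ) := hgt
          simp only [hldef, Fin.val_mk] at h1 h3 hvval
          omega
      have hplt : pos1 < t := by
        rw [Fin.lt_def]
        simp only [htdef, Fin.val_mk]
        omega
      have hpt : pos1 ≠ t := ne_of_lt hplt
      have hwval : (w pos1 : ℕ) < (w t : ℕ) := by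
        rw [hpos, hwtval]
        simp only [hcmdef, Fin.val_mk]
        omega
      set w2 : Equiv.Perm (Fin (n + 1)) := w * Equiv.swap pos1 t with hw2def
      have happ : ∀ i, w2 i = w (Equiv.swap pos1 t i) := fun i => rfl
      have hW2 : ∀ (l : ℕ) (hl : l < n + 1 - p) (h' : p + l < n + 1),
          w2 ⟨p + l, h'⟩ = valsF f' ⟨l, hl⟩ := by
        intro l hl h'
        by_cases hlk : l = (k0 : ℕ)
        · have hteq : (⟨p + l, h'⟩ : Fin (n + 1)) = t := Fin.ext (by simp [htdef, hlk])
          rw [happ, hteq, Equiv.swap_apply_right, hpos]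
          apply Fin.ext
          have hfk : (f' ⟨l, hl⟩ : ℕ) = (F.1 k0 : ℕ) + 1 := by
            rw [hf'val, if_pos (Fin.ext (by simp [hlk]))]
          simp only [hcmdef, Fin.val_mk, valsF, hfk]
          omega
        · have hne1 : (⟨p + l, h'⟩ : Fin (n + 1)) ≠ pos1 := by
            intro hh
            have := congrArg Fin.val hh
            simp only [Fin.val_mk] at this
            omega
          have hne2 : (⟨p + l, h'⟩ : Fin (n + 1)) ≠ t := by
            intro hh
            have := congrArg Fin.val hh
            simp only [htdef, Fin.val_mk] at this
            omega
          rw [happ, Equiv.swap_apply_of_ne_of_ne hne1 hne2, hwdef, toPerm_sb hpn F hl h']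
          apply Fin.ext
          have hfk : (f' ⟨l, hl⟩ : ℕ) = (F.1 ⟨l, hl⟩ : ℕ) := by
            rw [hf'val, if_neg]
            intro hh
            have := congrArg Fin.val hh
            simp only [Fin.val_mk] at this
            exact hlk this
          simp only [valsF, hfk]
      have h2'' : ∀ i j : Fin (n + 1), p ≤ (i : ℕ) → i < j → w2 i < w2 j := by
        intro i j hpi hij
        have hi' : (i : ℕ) < n + 1 := i.isLt
        have hj' : (j : ℕ) < n + 1 := j.isLt
        have hij' : (i : ℕ) < (j : ℕ) := hij
        have hli : (i : ℕ) - p < n + 1 - p := by omega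
        have hlj : (j : ℕ) - p < n + 1 - p := by omega
        have hci : i = ⟨p + ((i : ℕ) - p), by omega⟩ := Fin.ext (by simp only [Fin.val_mk]; omega)
        have hcj : j = ⟨p + ((j : ℕ) - p), by omega⟩ := Fin.ext (by simp only [Fin.val_mk]; omega)
        have e1 : w2 i = valsF f' ⟨(i : ℕ) - p, hli⟩ := by
          conv_lhs => rw [hci]
          exact hW2 _ hli _
        have e2 : w2 j = valsF f' ⟨(j : ℕ) - p, hlj⟩ := by
          conv_lhs => rw [hcj]
          exact hW2 _ hlj _
        rw [e1, e2]
        apply valsF_strictMono hf'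
        rw [Fin.lt_def]
        simp only [Fin.val_mk]
        omega
      have h1'' : ∀ i j : Fin (n + 1), i < j → (j : ℕ) < p → w2 i < w2 j := by
        intro i j hij hjp
        have hij' : (i : ℕ) < (j : ℕ) := hij
        have hit : i ≠ t := by
          intro hh; have := congrArg Fin.val hh
          simp only [htdef, Fin.val_mk] at this; omega
        have hjt : j ≠ t := by
          intro hh; have := congrArg Fin.val hh
          simp only [htdef, Fin.val_mk] at this; omega
        by_cases hip : i = pos1
        · rw [happ, happ, hip, Equiv.swap_apply_left]
          have hjp1 : j ≠ pos1 := by rw [← hip]; exact (ne_of_lt hij).symm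
          rw [Equiv.swap_apply_of_ne_of_ne hjp1 hjt]
          -- w t < w j
          have h1 : (w pos1 : ℕ) < (w j : ℕ) := by
            have := (toPerm hpn F).2.1 pos1 j (hip ▸ hij) hjp
            rw [← hwdef] at this
            exact this
          rw [hpos] at h1
          simp only [hcmdef, Fin.val_mk] at h1
          have h2 : (w j : ℕ) ≠ c := by
            intro hh
            have : w j = w t := Fin.ext (by rw [hwtval]; exact hh)
            have := w.injective this
            exact hjt this
          rw [Fin.lt_def, hwtval]
          omega
        · rw [happ, happ, Equiv.swap_apply_of_ne_of_ne hip hit]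
          by_cases hjp1 : j = pos1
          · rw [hjp1, Equiv.swap_apply_left]
            have h1 : (w i : ℕ) < (w pos1 : ℕ) := by
              have := (toPerm hpn F).2.1 i pos1 (hjp1 ▸ hij) (hjp1 ▸ hjp)
              rw [← hwdef] at this
              exact this
            rw [hpos] at h1
            simp only [hcmdef, Fin.val_mk] at h1
            rw [Fin.lt_def, hwtval]
            omega
          · rw [Equiv.swap_apply_of_ne_of_ne hjp1 hjt]
            have := (toPerm hpn F).2.1 i j hij hjp
            rw [← hwdef] at this
            exact this
      set W2 : GrassType n p := ⟨w2, h1'', h2''⟩ with hW2def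
      have hphi : toPart W2 = F' := by
        apply Subtype.ext
        funext k
        apply Fin.ext
        rw [toPart_apply]
        show p + (k : ℕ) - ((W2.1 ⟨p + (k : ℕ), by have := k.isLt; omega⟩ : Fin (n+1)) : ℕ)
          = (f' k : ℕ)
        have hkq := k.isLt
        rw [show W2.1 = w2 from rfl, hW2 (k : ℕ) hkq]
        have hb := (f' ⟨(k : ℕ), hkq⟩ : ℕ)
        have hfb : (f' ⟨(k : ℕ), hkq⟩ : ℕ) < p + 1 := (f' _).isLt
        have hke : (⟨(k : ℕ), hkq⟩ : Fin (n + 1 - p)) = k := Fin.ext rfl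
        rw [hke] at hfb ⊢
        simp only [valsF, Fin.val_mk]
        omega
      have hTP : toPerm hpn F' = W2 := by rw [← hphi, toPerm_toPart]
      have hstep : invNum w < invNum w2 := by
        apply invNum_lt_swap w hplt
        rw [Fin.lt_def]
        exact hwval
      have hIH := IH (d - 1) (by omega) F' G hle' hsum'
      rw [hTP] at hIH
      refine Relation.ReflTransGen.head ⟨hstep, pos1, t, hpt, rfl⟩ ?_
      exact hIH

end Back

lemma card_val_ge (m c : ℕ) :
    (Finset.univ.filter fun v : Fin m => c ≤ (v : ℕ)).card = m - c := by
  by_cases hc : c < m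
  · have : (Finset.univ.filter (fun v : Fin m => c ≤ (v : ℕ)))
        = Finset.Ici (⟨c, hc⟩ : Fin m) := by
      ext v; simp [Fin.le_def]
    rw [this, Fin.card_Ici]
  · rw [show (Finset.univ.filter (fun v : Fin m => c ≤ (v : ℕ))) = ∅ by
      apply Finset.filter_false_of_mem; intro v _; have := v.isLt; omega]
    simp; omega

/-- For the quotient `A_n/(A_(p-1) × A_(n-p))`, the Bruhat order on the minimal
coset representatives (the permutations of `[n+1]` increasing on positions `1..p`
and on positions `p+1..n+1`) is isomorphic, as a poset, to the containment order on
partitions fitting inside a `p × (n+1-p)` rectangle (recorded as antitone vectors of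
part sizes, ordered componentwise). -/
theorem bruhat_iso_young (n p : ℕ) (hp : 1 ≤ p) (hpn : p ≤ n) :
    ∃ e : {w : Equiv.Perm (Fin (n + 1)) //
            (∀ i j : Fin (n + 1), i < j → (j : ℕ) < p → w i < w j) ∧
            (∀ i j : Fin (n + 1), p ≤ (i : ℕ) → i < j → w i < w j)} ≃
          {f : Fin (n + 1 - p) → Fin (p + 1) // Antitone f},
      ∀ u v, bruhatLE u.1 v.1 ↔ ∀ i, (e u).1 i ≤ (e v).1 i := by
  refine ⟨⟨toPart, toPerm hpn, toPerm_toPart hpn, toPart_toPerm hpn⟩, ?_⟩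
  intro u v
  constructor
  · intro h k
    have hk := k.isLt
    have h' : p + (k : ℕ) < n + 1 := by omega
    have hval : ((v.1 ⟨p + (k : ℕ), h'⟩ : Fin (n + 1)) : ℕ)
        ≤ ((u.1 ⟨p + (k : ℕ), h'⟩ : Fin (n + 1)) : ℕ) := by
      set j := ((v.1 ⟨p + (k : ℕ), h'⟩ : Fin (n + 1)) : ℕ) with hjdef
      have hcnt := cnt_bruhat p h j
      have c1 := cnt_add_dnt p u.1 j
      have c2 := cnt_add_dnt p v.1 j
      have hdnt : dnt p v.1 j ≤ dnt p u.1 j := by omega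
      have hTsub : (Finset.univ.filter fun i : Fin (n + 1) => p + (k : ℕ) ≤ (i : ℕ)) ⊆
          (Finset.univ.filter fun i : Fin (n + 1) => p ≤ (i : ℕ) ∧ j ≤ ((v.1 i : Fin (n+1)) : ℕ)) := by
        intro i hi
        simp only [Finset.mem_filter, Finset.mem_univ, true_and] at hi ⊢
        refine ⟨by omega, ?_⟩
        have hiN := i.isLt
        have hl : (i : ℕ) - p < n + 1 - p := by omega
        have hg := sb_gap v (show (k : ℕ) ≤ (i : ℕ) - p by omega) hl h' (by omega)
        have hcast : (⟨p + ((i : ℕ) - p), by omega⟩ : Fin (n + 1)) = i :=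
          Fin.ext (by simp only [Fin.val_mk]; omega)
        rw [hcast] at hg
        omega
      have hlow : n + 1 - (p + (k : ℕ)) ≤ dnt p v.1 j := by
        have hd : dnt p v.1 j = (Finset.univ.filter
            fun i : Fin (n + 1) => p ≤ (i : ℕ) ∧ j ≤ ((v.1 i : Fin (n+1)) : ℕ)).card := rfl
        rw [hd, ← card_val_ge (n + 1) (p + (k : ℕ))]
        exact Finset.card_le_card hTsub
      by_contra hcon
      push_neg at hcon
      have husub : (Finset.univ.filter
            fun i : Fin (n + 1) => p ≤ (i : ℕ) ∧ j ≤ ((u.1 i : Fin (n+1)) : ℕ)) ⊆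
          (Finset.univ.filter fun i : Fin (n + 1) => p + (k : ℕ) + 1 ≤ (i : ℕ)) := by
        intro i hi
        simp only [Finset.mem_filter, Finset.mem_univ, true_and] at hi ⊢
        obtain ⟨hpi, hji⟩ := hi
        by_contra hik
        push_neg at hik
        have hiN := i.isLt
        have hl : (i : ℕ) - p < n + 1 - p := by omega
        have hg := sb_gap u (show (i : ℕ) - p ≤ (k : ℕ) by omega) hk (by omega) h'
        have hcast : (⟨p + ((i : ℕ) - p), by omega⟩ : Fin (n + 1)) = i :=
          Fin.ext (by simp only [Fin.val_mk]; omega)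
        rw [hcast] at hg
        omega
      have hup : dnt p u.1 j ≤ n + 1 - (p + (k : ℕ) + 1) := by
        have hd : dnt p u.1 j = (Finset.univ.filter
            fun i : Fin (n + 1) => p ≤ (i : ℕ) ∧ j ≤ ((u.1 i : Fin (n+1)) : ℕ)).card := rfl
        rw [hd, ← card_val_ge (n + 1) (p + (k : ℕ) + 1)]
        exact Finset.card_le_card husub
      omega
    show ((toPart u).1 k : ℕ) ≤ ((toPart v).1 k : ℕ)
    rw [toPart_apply, toPart_apply]
    exact Nat.sub_le_sub_left hval _
  · intro hcomp
    have hle : ∀ k, ((toPart u).1 k : ℕ) ≤ ((toPart v).1 k : ℕ) := fun k => hcomp k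
    have hb := back_aux hpn _ (toPart u) (toPart v) hle rfl
    rwa [toPerm_toPart hpn u, toPerm_toPart hpn v] at hb
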